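/- Let λ > 0, Δl > 0, and −2Δl ≤ X̲ ≤ 0 ≤ X̄ ≤ 2Δl. The set ψ = {(X, W) : X̲ ≤ X ≤ X̄, 0 ≤ W ≤ min(λ(X − Δl)^2, λ(X + Δl)^2)} is contained in the set Ψ = {(X, W) : X̲ ≤ X ≤ X̄, 0 ≤ W, W ≤ λ((X̄ − 2Δl)X + Δl^2), W ≤ λ((X̲ + 2Δl)X + Δl^2)}. -/
import Mathlib


theorem stmt5 (lam Δl Xlo Xhi : ℝ) (hlam : 0 < lam) (hΔl : 0 < Δl)
    (h1 : -(2 * Δl) ≤ Xlo) (h2 : Xlo ≤ 0) (h3 : 0 ≤ Xhi) (h4 : Xhi ≤ 2 * Δl) :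
    {p : ℝ × ℝ | Xlo ≤ p.1 ∧ p.1 ≤ Xhi ∧ 0 ≤ p.2 ∧
        p.2 ≤ min (lam * (p.1 - Δl) ^ 2) (lam * (p.1 + Δl) ^ 2)} ⊆
      {p : ℝ × ℝ | Xlo ≤ p.1 ∧ p.1 ≤ Xhi ∧ 0 ≤ p.2 ∧
        p.2 ≤ lam * ((Xhi - 2 * Δl) * p.1 + Δl ^ 2) ∧
        p.2 ≤ lam * ((Xlo + 2 * Δl) * p.1 + Δl ^ 2)} := by
  rintro ⟨X, W⟩ ⟨ha, hb, hc, hd⟩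
  have hd1 : W ≤ lam * (X - Δl) ^ 2 := hd.trans (min_le_left _ _)
  have hd2 : W ≤ lam * (X + Δl) ^ 2 := hd.trans (min_le_right _ _)
  refine ⟨ha, hb, hc, ?_, ?_⟩
  · rcases le_total X 0 with h | h
    · nlinarith [mul_nonneg hlam.le (mul_nonneg (neg_nonneg.mpr h) (by linarith : (0:ℝ) ≤ X + 2*Δl))]
    · nlinarith [mul_nonneg hlam.le (mul_nonneg h (by linarith : (0:ℝ) ≤ Xhi - X))]
  · rcases le_total X 0 with h | h
    · nlinarith [mul_nonneg hlam.le (mul_nonneg (neg_nonneg.mpr h) (by linarith : (0:ℝ) ≤ X - Xlo))]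
    · nlinarith [mul_nonneg hlam.le (mul_nonneg h (by linarith : (0:ℝ) ≤ 2*Δl - X))]
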